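/- Let G be a group acting on a countable set Y such that every orbit is infinite. Then for any finite subsets A, B of Y there exists h in G with h(A) ∩ B = ∅. -/

import Mathlib

open scoped Pointwise


/-- If all orbits of a group action on a countable set are infinite, then any
finite set can be moved off any other finite set. -/
theorem stmt_1 {G Y : Type*} [Group G] [Countable Y] [MulAction G Y]
    (horb : ∀ y : Y, (MulAction.orbit G y).Infinite)
    (A B : Set Y) (hA : A.Finite) (hB : B.Finite) :
    ∃ h : G, ((h • ·) '' A) ∩ B = ∅ := by
  classical
  by_contra hcon
  push_neg at hcon
  -- For each pair (a,b), choose g with g • a = b if possible, else 1.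
  set g : Y × Y → G := fun p =>
    if hp : ∃ k : G, k • p.1 = p.2 then hp.choose else 1 with hg
  set H : Y × Y → Subgroup G := fun p => MulAction.stabilizer G p.1 with hH
  set s : Finset (Y × Y) := hA.toFinset ×ˢ hB.toFinset with hs
  have hcovers : ⋃ i ∈ s, (g i) • (H i : Set G) = Set.univ := by
    ext h
    simp only [Set.mem_iUnion, Set.mem_univ, iff_true]
    have := hcon h
    obtain ⟨b, ⟨a, haA, hab⟩, hbB⟩ := this
    refine ⟨(a, b), ?_, ?_⟩
    · simp [hs, haA, hbB]
    · have hex : ∃ k : G, k • (a, b).1 = (a, b).2 := ⟨h, hab⟩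
      have hge : g (a, b) • a = b := by
        simp only [hg, dif_pos hex]
        exact hex.choose_spec
      refine Set.mem_smul_set.mpr ⟨(g (a, b))⁻¹ * h, ?_, by simp [smul_eq_mul, ← mul_assoc]⟩
      simp only [hH, SetLike.mem_coe, MulAction.mem_stabilizer_iff, mul_smul, hab,
        inv_smul_eq_iff, hge]
  obtain ⟨k, hk, hkfi⟩ := Subgroup.exists_finiteIndex_of_leftCoset_cover hcovers
  have : Finite (G ⧸ MulAction.stabilizer G k.1) := by
    have := hkfi
    simp only [hH] at this
    exact Subgroup.finite_quotient_of_finiteIndex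
  have : (MulAction.orbit G k.1).Finite := by
    have e := MulAction.orbitEquivQuotientStabilizer G k.1
    exact Set.finite_coe_iff.mp (Finite.of_equiv _ e.symm)
  exact (horb k.1) this
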